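/- Let (A,C)_ψ be an entwining structure with C finitely generated projective over k. If there exists a right C-comodule isomorphism φ : C* → C such that ψ∘(φ⊗A)∘ψ̄ = A⊗φ, then e := φ(ε) satisfies C* ⇀ e = C and ψ(e ⊗ a) = a ⊗ e for all a ∈ A; moreover φ(ξ) = ξ ⇀ e for all ξ ∈ C*. -/

import Mathlib

open TensorProduct LinearMap

noncomputable section

variable (k A C : Type*) [CommRing k] [Ring A] [Algebra k A]
  [AddCommGroup C] [Module k C] [Coalgebra k C]

/-- An entwining structure `(A,C)_ψ` over `k`. -/
structure Entwining where
  psi : C ⊗[k] A →ₗ[k] A ⊗[k] C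
  mul_compat :
    psi ∘ₗ lTensor C (LinearMap.mul' k A)
      = rTensor C (LinearMap.mul' k A)
        ∘ₗ (TensorProduct.assoc k A A C).symm.toLinearMap
        ∘ₗ lTensor A psi
        ∘ₗ (TensorProduct.assoc k A C A).toLinearMap
        ∘ₗ rTensor A psi
        ∘ₗ (TensorProduct.assoc k C A A).symm.toLinearMap
  one_compat : ∀ c : C, psi (c ⊗ₜ[k] (1 : A)) = (1 : A) ⊗ₜ[k] c
  comul_compat :
    lTensor A (Coalgebra.comul (R := k) (A := C)) ∘ₗ psi
      = (TensorProduct.assoc k A C C).toLinearMap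
        ∘ₗ rTensor C psi
        ∘ₗ (TensorProduct.assoc k C A C).symm.toLinearMap
        ∘ₗ lTensor C psi
        ∘ₗ (TensorProduct.assoc k C C A).toLinearMap
        ∘ₗ rTensor A (Coalgebra.comul (R := k) (A := C))
  counit_compat : ∀ (c : C) (a : A),
    (TensorProduct.rid k A)
        ((lTensor A (Coalgebra.counit (R := k) (A := C))) (psi (c ⊗ₜ[k] a)))
      = Coalgebra.counit (R := k) c • a

variable {k A C} in
/-- Evaluation of the first (dual) factor at `c`: `ξ ⊗ a ↦ ξ(c) • a`. -/
def evFst (c : C) : Module.Dual k C ⊗[k] A →ₗ[k] A :=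
  TensorProduct.lift ((LinearMap.lsmul k A) ∘ₗ
    (LinearMap.applyₗ (R := k) c : (C →ₗ[k] k) →ₗ[k] k))

variable {k A C} in
/-- Evaluation of the second (coalgebra) factor against `ξ`: `a ⊗ c ↦ ξ(c) • a`. -/
def evSnd (ξ : Module.Dual k C) : A ⊗[k] C →ₗ[k] A :=
  (TensorProduct.rid k A).toLinearMap ∘ₗ lTensor A ξ

variable {k A C} in
/-- `ψ̄ : A ⊗ C* → C* ⊗ A` is a factorisation map for the entwining `ψ`:
`⟨c^α, ξ⟩ a_α = ξ_i(c) a^i`. -/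
def IsFactorisation (E : Entwining k A C)
    (ψbar : A ⊗[k] Module.Dual k C →ₗ[k] Module.Dual k C ⊗[k] A) : Prop :=
  ∀ (a : A) (ξ : Module.Dual k C) (c : C),
    evFst c (ψbar (a ⊗ₜ[k] ξ)) = evSnd ξ (E.psi (c ⊗ₜ[k] a))

/-- The product of `B = C^{*op}`, i.e. the opposite convolution product:
`⟨c, b b'⟩ = ⟨c₍₂₎, b⟩ ⟨c₍₁₎, b'⟩`, as a linear map `B ⊗ B →ₗ B`. -/
def opConv : Module.Dual k C ⊗[k] Module.Dual k C →ₗ[k] Module.Dual k C :=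
  ((LinearMap.llcomp k C (C ⊗[k] C) k).flip (Coalgebra.comul (R := k) (A := C)))
  ∘ₗ (LinearMap.llcomp k (C ⊗[k] C) (k ⊗[k] k) k (LinearMap.mul' k k))
  ∘ₗ TensorProduct.homTensorHomMap (RingHom.id k) C C k k
  ∘ₗ (TensorProduct.comm k (Module.Dual k C) (Module.Dual k C)).toLinearMap

variable {k A C} in
/-- The multiplication of the smash product `B #_ψ̄ A` on `B ⊗ A`, `B = C^{*op}`:
`(b ⊗ a)(b' ⊗ a') = b ψ̄(a ⊗ b') a'`. -/
def smashMul (ψbar : A ⊗[k] Module.Dual k C →ₗ[k] Module.Dual k C ⊗[k] A) :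
    (Module.Dual k C ⊗[k] A) ⊗[k] (Module.Dual k C ⊗[k] A) →ₗ[k]
      Module.Dual k C ⊗[k] A :=
  rTensor A (opConv k C)
  ∘ₗ (TensorProduct.assoc k (Module.Dual k C) (Module.Dual k C) A).symm.toLinearMap
  ∘ₗ lTensor (Module.Dual k C) (lTensor (Module.Dual k C) (LinearMap.mul' k A))
  ∘ₗ lTensor (Module.Dual k C) (TensorProduct.assoc k (Module.Dual k C) A A).toLinearMap
  ∘ₗ lTensor (Module.Dual k C) (rTensor A ψbar)
  ∘ₗ lTensor (Module.Dual k C) (TensorProduct.assoc k A (Module.Dual k C) A).symm.toLinearMap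
  ∘ₗ (TensorProduct.assoc k (Module.Dual k C) A (Module.Dual k C ⊗[k] A)).toLinearMap

/-- The unit `ε ⊗ 1_A` of the smash product. -/
def smashOne : Module.Dual k C ⊗[k] A :=
  (Coalgebra.counit (R := k) (A := C)) ⊗ₜ[k] (1 : A)

variable {k C} in
/-- `φ_e : C* → C`, `ξ ↦ ξ ⇀ e = e₍₁₎ ⟨e₍₂₎, ξ⟩`. -/
def phiMap (e : C) : Module.Dual k C →ₗ[k] C :=
  (((LinearMap.llcomp k (C ⊗[k] C) (C ⊗[k] k) C
      (TensorProduct.rid k C).toLinearMap)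
    ∘ₗ (LinearMap.lTensorHom C)).flip) (Coalgebra.comul (R := k) e)

variable {k C} in
/-- `ξ ↦ e ↼ ξ = ⟨e₍₁₎, ξ⟩ e₍₂₎`. -/
def rarrowMap (e : C) : Module.Dual k C →ₗ[k] C :=
  (((LinearMap.llcomp k (C ⊗[k] C) (k ⊗[k] C) C
      (TensorProduct.lid k C).toLinearMap)
    ∘ₗ (LinearMap.rTensorHom C)).flip) (Coalgebra.comul (R := k) e)

variable {k C} in
/-- The (standard) convolution product on `C*`: `(ξ ξ')(c) = ξ(c₍₁₎) ξ'(c₍₂₎)`. -/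
def conv (ξ ξ' : Module.Dual k C) : Module.Dual k C :=
  (LinearMap.mul' k k) ∘ₗ TensorProduct.map ξ ξ' ∘ₗ Coalgebra.comul (R := k)

variable {k C} in
/-- `coactD` is the right `C`-coaction on `C*` determined by
`ξ₍₀₎ ⟨ξ₍₁₎, ξ'⟩ = ξ' ξ`. -/
def IsDualCoaction (coactD : Module.Dual k C →ₗ[k] Module.Dual k C ⊗[k] C) :
    Prop :=
  ∀ ξ ξ' : Module.Dual k C,
    (TensorProduct.rid k (Module.Dual k C))
        ((lTensor (Module.Dual k C) ξ') (coactD ξ))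
      = conv ξ' ξ

variable {k A C} in
lemma evFst_eq_dualTensorHom (c : C) (x : Module.Dual k C ⊗[k] A) :
    evFst c x = dualTensorHom k C A x c := by
  induction x using TensorProduct.induction_on with
  | zero => simp
  | tmul ξ a => simp [evFst, dualTensorHom_apply]
  | add x y hx hy => simp [map_add, hx, hy]

variable {k A C} in
lemma dualTensorHom_inj_of_projective [Module.Finite k C] [Module.Projective k C] :
    Function.Injective (dualTensorHom k C A) := by
  obtain ⟨n, f, g, -, -, hfg⟩ := Module.Finite.exists_comp_eq_id_of_projective k C
  have key : ∀ z : Module.Dual k C ⊗[k] A,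
      dualTensorHom k (Fin n → k) A (rTensor A f.dualMap z)
        = (dualTensorHom k C A z) ∘ₗ f := by
    intro z
    induction z using TensorProduct.induction_on with
    | zero => simp
    | tmul ξ a => ext v; simp [dualTensorHom_apply]
    | add x y hx hy =>
        simp only [map_add, hx, hy, add_comp]
  intro x y hxy
  have h2 : rTensor A f.dualMap x = rTensor A f.dualMap y := by
    apply (dualTensorHomEquivOfBasis (N := A) (Pi.basisFun k (Fin n))).injective
    rw [dualTensorHomEquivOfBasis_apply, dualTensorHomEquivOfBasis_apply, key, key, hxy]
  have h3 := congrArg (rTensor A g.dualMap) h2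
  rwa [← LinearMap.comp_apply, ← LinearMap.comp_apply, ← rTensor_comp,
    LinearMap.dualMap_comp_dualMap, hfg, LinearMap.dualMap_id, rTensor_id,
    LinearMap.id_apply, LinearMap.id_apply] at h3

variable {k A C} in
lemma psibar_counit [Module.Finite k C] [Module.Projective k C]
    (E : Entwining k A C)
    (ψbar : A ⊗[k] Module.Dual k C →ₗ[k] Module.Dual k C ⊗[k] A)
    (hfact : IsFactorisation E ψbar) (a : A) :
    ψbar (a ⊗ₜ[k] (Coalgebra.counit (R := k) (A := C)))
      = (Coalgebra.counit (R := k) (A := C)) ⊗ₜ[k] a := by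
  apply dualTensorHom_inj_of_projective
  ext c
  rw [← evFst_eq_dualTensorHom, ← evFst_eq_dualTensorHom,
    hfact a (Coalgebra.counit (R := k) (A := C)) c]
  have h1 : evSnd (Coalgebra.counit (R := k) (A := C)) (E.psi (c ⊗ₜ[k] a))
      = Coalgebra.counit (R := k) c • a := E.counit_compat c a
  rw [h1]
  simp [evFst]

variable {k C} in
lemma conv_counit (ξ : Module.Dual k C) :
    conv ξ (Coalgebra.counit (R := k) (A := C)) = ξ := by
  ext c
  have h1 := LinearMap.congr_fun
    (rTensor_comp_lTensor (R := k) (f := ξ) (g := Coalgebra.counit (R := k) (A := C)))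
    ((Coalgebra.comul (R := k)) c)
  rw [LinearMap.comp_apply] at h1
  rw [eq_comm] at h1
  have h2 : (lTensor C (Coalgebra.counit (R := k) (A := C)))
      ((Coalgebra.comul (R := k)) c) = c ⊗ₜ[k] (1 : k) :=
    Coalgebra.lTensor_counit_comul c
  simp [conv, h1, h2, LinearMap.mul'_apply]

/-- if `C` is f.g. projective and `φ : C* → C` is a right
`C`-comodule isomorphism with `ψ ∘ (φ ⊗ A) ∘ ψ̄ = A ⊗ φ`, then `e := φ(ε)`
satisfies `C* ⇀ e = C` and `ψ(e ⊗ a) = a ⊗ e`; moreover `φ(ξ) = ξ ⇀ e`. -/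
theorem comodule_iso_gives_frobenius_element
    [Module.Finite k C] [Module.Projective k C]
    (E : Entwining k A C)
    (ψbar : A ⊗[k] Module.Dual k C →ₗ[k] Module.Dual k C ⊗[k] A)
    (hfact : IsFactorisation E ψbar)
    (coactD : Module.Dual k C →ₗ[k] Module.Dual k C ⊗[k] C)
    (hcoactD : IsDualCoaction coactD)
    (φ : Module.Dual k C →ₗ[k] C)
    (hbij : Function.Bijective φ)
    (hcolin : (Coalgebra.comul (R := k) (A := C)) ∘ₗ φ = rTensor C φ ∘ₗ coactD)
    (hcompat : E.psi ∘ₗ rTensor A φ ∘ₗ ψbar = lTensor A φ) :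
    Function.Surjective (phiMap (k := k) (φ (Coalgebra.counit (R := k) (A := C)))) ∧
    (∀ a : A,
      E.psi ((φ (Coalgebra.counit (R := k) (A := C))) ⊗ₜ[k] a)
        = a ⊗ₜ[k] (φ (Coalgebra.counit (R := k) (A := C)))) ∧
    (∀ ξ : Module.Dual k C,
      φ ξ = phiMap (k := k) (φ (Coalgebra.counit (R := k) (A := C))) ξ) := by
  set ε : Module.Dual k C := Coalgebra.counit (R := k) (A := C) with hε
  set e : C := φ ε with he
  -- Third claim: φ ξ = ξ ⇀ e
  have h3 : ∀ ξ : Module.Dual k C, φ ξ = phiMap (k := k) e ξ := by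
    intro ξ
    have hcom : Coalgebra.comul (R := k) e = rTensor C φ (coactD ε) :=
      LinearMap.congr_fun hcolin ε
    have hphi : phiMap (k := k) e ξ
        = (TensorProduct.rid k C) ((lTensor C ξ) (Coalgebra.comul (R := k) e)) := rfl
    rw [hphi, hcom]
    have ha := LinearMap.congr_fun (lTensor_comp_rTensor (R := k) (f := φ) (g := ξ)) (coactD ε)
    have hb := LinearMap.congr_fun (rTensor_comp_lTensor (R := k) (f := φ) (g := ξ)) (coactD ε)
    rw [LinearMap.comp_apply] at ha hb
    have h4 : (lTensor C ξ) ((rTensor C φ) (coactD ε))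
        = (rTensor k φ) ((lTensor (Module.Dual k C) ξ) (coactD ε)) := by
      rw [ha, hb]
    rw [h4]
    have h5 : ∀ z : Module.Dual k C ⊗[k] k,
        (TensorProduct.rid k C) ((rTensor k φ) z)
          = φ ((TensorProduct.rid k (Module.Dual k C)) z) := by
      intro z
      induction z using TensorProduct.induction_on with
      | zero => simp
      | tmul x r => simp
      | add x y hx hy => simp [map_add, hx, hy]
    rw [h5, hcoactD ε ξ, conv_counit]
  refine ⟨?_, ?_, h3⟩
  · intro c
    obtain ⟨ξ, hξ⟩ := hbij.2 c
    exact ⟨ξ, by rw [← h3, hξ]⟩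
  · intro a
    have hψ := LinearMap.congr_fun hcompat (a ⊗ₜ[k] ε)
    rw [LinearMap.comp_apply, LinearMap.comp_apply,
      psibar_counit E ψbar hfact a] at hψ
    simpa using hψ
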